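/- Let u be an automorphism of order 3 of the quaternion group Q_8, and let G = Q_8 ⋊ ⟨u⟩. Then every automorphism φ of G such that φ(û) is conjugate in G to û is an inner automorphism of G. (In the paper's notation: Out(Q_8, u) = {1}.) -/

import Mathlib

open QuaternionGroup
abbrev Q8 := QuaternionGroup 2

def fq (p q : Q8) : Q8 → Q8
  | .a i => p ^ i.val
  | .xa i => p ^ ((-i).val) * q

set_option maxRecDepth 10000 in
lemma coreLem : ∀ p q : Q8, (q*q = p*p ∧ q*p*q⁻¹ = p⁻¹ ∧ p*p ≠ 1) →
    (fq p q (fq p q p) = a 1 ∧ fq p q (fq p q q) = xa 0) → ¬(p = a 1 ∧ q = xa 0) →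
    ∀ r s : Q8, (s*s = r*r ∧ s*r*s⁻¹ = r⁻¹ ∧ r*r ≠ 1) →
    fq p q r = fq r s p → fq p q s = fq r s q →
    (r = a 1 ∧ s = xa 0) ∨ (r = p ∧ s = q) ∨ (r = fq p q p ∧ s = fq p q q) := by decide

lemma hgen : ∀ i : ZMod 4, (a i : Q8) = a 1 ^ i.val ∧ (xa i : Q8) = a 1 ^ ((-i).val) * xa 0 := by
  decide

lemma eval (w : MulAut Q8) : ∀ g, w g = fq (w (a 1)) (w (xa 0)) g := by
  intro g
  cases g with
  | a i =>
    conv_lhs => rw [(hgen i).1]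
    rw [map_pow]; rfl
  | xa i =>
    conv_lhs => rw [(hgen i).2]
    rw [map_mul, map_pow]; rfl

lemma constraints (w : MulAut Q8) :
    w (xa 0) * w (xa 0) = w (a 1) * w (a 1) ∧
    w (xa 0) * w (a 1) * (w (xa 0))⁻¹ = (w (a 1))⁻¹ ∧ w (a 1) * w (a 1) ≠ 1 := by
  refine ⟨?_, ?_, ?_⟩
  · rw [← map_mul, ← map_mul]; exact congrArg w (by decide)
  · rw [← map_inv, ← map_mul, ← map_mul, ← map_inv]; exact congrArg w (by decide)
  · rw [← map_mul]
    intro h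
    have := w.injective (h.trans (map_one w).symm)
    exact absurd this (by decide)

lemma centralizer_lem (u v : MulAut Q8) (hu : orderOf u = 3)
    (hc : ∀ x, u (v x) = v (u x)) : ∃ k : ℕ, ∀ x, v x = (u ^ k) x := by
  set p := u (a 1) with hp
  set q := u (xa 0) with hq
  set r := v (a 1) with hr
  set s := v (xa 0) with hs
  have hu3 : u ^ 3 = 1 := hu ▸ pow_orderOf_eq_one u
  have hO : fq p q (fq p q p) = a 1 ∧ fq p q (fq p q q) = xa 0 := by
    constructor
    · rw [← eval u, ← eval u]
      have : (u ^ 3) (a 1) = a 1 := by rw [hu3]; rfl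
      simpa [pow_succ, MulAut.mul_apply] using this
    · rw [← eval u, ← eval u]
      have : (u ^ 3) (xa 0) = xa 0 := by rw [hu3]; rfl
      simpa [pow_succ, MulAut.mul_apply] using this
  have hne : ¬(p = a 1 ∧ q = xa 0) := by
    rintro ⟨h1, h2⟩
    have : u = 1 := by
      ext g
      rw [eval u g, ← hp, ← hq, h1, h2]
      exact (by decide : ∀ g : Q8, fq (a 1) (xa 0) g = g) g
    rw [this, orderOf_one] at hu
    exact (by norm_num : (1:ℕ) ≠ 3) hu
  have hc1 : fq p q r = fq r s p := by
    rw [← eval u, ← eval v]; exact hc (a 1)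
  have hc2 : fq p q s = fq r s q := by
    rw [← eval u, ← eval v]; exact hc (xa 0)
  rcases coreLem p q (constraints u) hO hne r s (constraints v) hc1 hc2 with h | h | h
  · exact ⟨0, fun x => by
      rw [eval v x, ← hr, ← hs, h.1, h.2, pow_zero]
      exact (by decide : ∀ g : Q8, fq (a 1) (xa 0) g = g) x⟩
  · exact ⟨1, fun x => by rw [eval v x, ← hr, ← hs, h.1, h.2, pow_one]; exact (eval u x).symm⟩
  · refine ⟨2, fun x => ?_⟩
    have h2 : (u ^ 2) (a 1) = fq p q p := by
      rw [pow_two, MulAut.mul_apply, ← hp, eval u]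
    have h2' : (u ^ 2) (xa 0) = fq p q q := by
      rw [pow_two, MulAut.mul_apply, ← hq, eval u]
    rw [eval v x, ← hr, ← hs, h.1, h.2, ← h2, ← h2', ← eval (u ^ 2) x]


open SemidirectProduct

set_option maxHeartbeats 1000000 in
/-- For an automorphism `u` of order 3 of `Q₈` and `G = Q₈ ⋊ ⟨u⟩`, every automorphism
`φ` of `G` sending `û` to a `G`-conjugate of `û` is inner; i.e. `Out(Q₈, u) = 1`. -/
theorem out_q8_pair_trivial
    (u : MulAut (QuaternionGroup 2)) (hu : orderOf u = 3)
    (φ : MulAut (SemidirectProduct (QuaternionGroup 2)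
      ↥(Subgroup.zpowers u) ((Subgroup.zpowers u).subtype)))
    (hφ : IsConj
      (φ (SemidirectProduct.inr ⟨u, Subgroup.mem_zpowers u⟩))
      (SemidirectProduct.inr ⟨u, Subgroup.mem_zpowers u⟩)) :
    ∃ g : SemidirectProduct (QuaternionGroup 2)
      ↥(Subgroup.zpowers u) ((Subgroup.zpowers u).subtype),
      ∀ x, φ x = g * x * g⁻¹ := by
  obtain ⟨c, hc⟩ := hφ
  set d := (c : SemidirectProduct (QuaternionGroup 2)
      ↥(Subgroup.zpowers u) ((Subgroup.zpowers u).subtype)) with hd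
  set u0 : ↥(Subgroup.zpowers u) := ⟨u, Subgroup.mem_zpowers u⟩ with hu0
  set uhat := (inr u0 : SemidirectProduct (QuaternionGroup 2)
      ↥(Subgroup.zpowers u) ((Subgroup.zpowers u).subtype)) with huhat
  set ψ := MulAut.conj d * φ with hψ
  have hceq : d * φ uhat = uhat * d := hc.eq
  have hψu : ψ uhat = uhat := by
    have h1 : d * φ uhat * d⁻¹ = uhat := by
      rw [hceq, mul_inv_cancel_right]
    simpa [hψ, MulAut.mul_apply, MulAut.conj_apply, mul_assoc] using h1
  have hcard : Nat.card ↥(Subgroup.zpowers u) = 3 := by rw [Nat.card_zpowers, hu]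
  have hker : ∀ x : Q8, SemidirectProduct.rightHom (ψ (inl x)) = 1 := by
    intro x
    by_contra hne
    have h3 : orderOf (SemidirectProduct.rightHom (ψ (inl x))) = 3 := by
      have hdvd := orderOf_dvd_natCard (SemidirectProduct.rightHom (ψ (inl x)))
      rw [hcard] at hdvd
      rcases Nat.prime_three.eq_one_or_self_of_dvd _ hdvd with h | h
      · exact absurd (orderOf_eq_one_iff.mp h) hne
      · exact h
    have hdvd1 : orderOf (SemidirectProduct.rightHom (ψ (inl x))) ∣ orderOf (ψ (inl x)) :=
      orderOf_map_dvd _ _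
    have he1 : orderOf (ψ (inl x)) = orderOf (inl x :
        SemidirectProduct (QuaternionGroup 2) ↥(Subgroup.zpowers u)
          ((Subgroup.zpowers u).subtype)) :=
      orderOf_injective ψ.toMonoidHom ψ.injective _
    have he2 : orderOf (inl x : SemidirectProduct (QuaternionGroup 2)
        ↥(Subgroup.zpowers u) ((Subgroup.zpowers u).subtype)) = orderOf x :=
      orderOf_injective inl inl_injective x
    have h8 : orderOf x ∣ 8 := by
      have h := orderOf_dvd_natCard x
      rwa [(by rw [Nat.card_eq_fintype_card]; decide : Nat.card Q8 = 8)] at h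
    rw [h3, he1, he2] at hdvd1
    exact (by norm_num : ¬ (3 ∣ 8)) (hdvd1.trans h8)
  have hmem : ∀ x : Q8, inl ((ψ (inl x)).left) = ψ (inl x) := by
    intro x
    conv_rhs => rw [← inl_left_mul_inr_right (ψ (inl x))]
    have h : (ψ (inl x)).right = 1 := hker x
    rw [h, map_one, mul_one]
  set vf : Q8 →* Q8 :=
    { toFun := fun x => (ψ (inl x)).left
      map_one' := by simp
      map_mul' := by
        intro x y
        apply inl_injective (φ := (Subgroup.zpowers u).subtype)
        show inl ((ψ (inl (x * y))).left) = inl ((ψ (inl x)).left * (ψ (inl y)).left)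
        rw [hmem (x * y), map_mul inl x y, map_mul ψ, map_mul inl, hmem x, hmem y] } with hvf
  have hvfapp : ∀ x, inl (vf x) = ψ (inl x) := hmem
  have hinj : Function.Injective vf := by
    intro x y hxy
    have h : ψ (inl x) = ψ (inl y) := by rw [← hvfapp x, ← hvfapp y, hxy]
    exact inl_injective (ψ.injective h)
  set v : MulAut Q8 := MulEquiv.ofBijective vf (Finite.injective_iff_bijective.mp hinj) with hv
  have hvapp : ∀ x, v x = vf x := fun _ => rfl
  have hcomm : ∀ x, u (v x) = v (u x) := by
    intro x
    apply inl_injective (φ := (Subgroup.zpowers u).subtype)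
    rw [hvapp, hvapp, hvfapp (u x)]
    calc inl (u (vf x)) = inl (((Subgroup.zpowers u).subtype u0) (vf x)) := rfl
      _ = inr u0 * inl (vf x) * inr u0⁻¹ := inl_aut u0 (vf x)
      _ = uhat * inl (vf x) * uhat⁻¹ := by rw [huhat, map_inv]
      _ = ψ uhat * ψ (inl x) * (ψ uhat)⁻¹ := by rw [hψu, hvfapp x]
      _ = ψ (uhat * inl x * uhat⁻¹) := by rw [map_mul, map_mul, map_inv]
      _ = ψ (inr u0 * inl x * inr u0⁻¹) := by rw [huhat, map_inv]
      _ = ψ (inl (((Subgroup.zpowers u).subtype u0) x)) := by rw [← inl_aut]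
      _ = ψ (inl (u x)) := rfl
  obtain ⟨k, hk⟩ := centralizer_lem u v hu hcomm
  set w0 : ↥(Subgroup.zpowers u) := u0 ^ k with hw0
  set g0 := (inr w0 : SemidirectProduct (QuaternionGroup 2)
      ↥(Subgroup.zpowers u) ((Subgroup.zpowers u).subtype)) with hg0
  have hsub : (Subgroup.zpowers u).subtype w0 = u ^ k := by
    rw [hw0, hu0]
    simp
  have hψinl : ∀ x : Q8, ψ (inl x) = g0 * inl x * g0⁻¹ := by
    intro x
    rw [← hvfapp x, ← hvapp x, hk x]
    calc inl ((u ^ k) x) = inl (((Subgroup.zpowers u).subtype w0) x) := by rw [hsub]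
      _ = inr w0 * inl x * inr w0⁻¹ := inl_aut w0 x
      _ = g0 * inl x * g0⁻¹ := by rw [hg0, map_inv]
  have hψuhat : ψ uhat = g0 * uhat * g0⁻¹ := by
    rw [hψu, huhat, hg0, ← map_inv, ← map_mul, ← map_mul]
    congr 1
    rw [hw0]
    rw [(Commute.refl u0).pow_left k, mul_inv_cancel_right]
  have hmain : ∀ g : SemidirectProduct (QuaternionGroup 2)
      ↥(Subgroup.zpowers u) ((Subgroup.zpowers u).subtype), ψ g = g0 * g * g0⁻¹ := by
    intro g
    obtain ⟨m, hm⟩ := g.right.2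
    have hgr : inr g.right = uhat ^ m := by
      rw [huhat, ← map_zpow]
      congr 1
      exact Subtype.ext (by rw [← hm]; rfl)
    conv_lhs => rw [← inl_left_mul_inr_right g]
    conv_rhs => rw [← inl_left_mul_inr_right g]
    rw [map_mul, hψinl, hgr, map_zpow, hψuhat, conj_zpow]
    group
  refine ⟨d⁻¹ * g0, fun x => ?_⟩
  have hψx : ψ x = d * φ x * d⁻¹ := by
    rw [hψ, MulAut.mul_apply, MulAut.conj_apply]
  have hx : d * φ x * d⁻¹ = g0 * x * g0⁻¹ := hψx.symm.trans (hmain x)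
  have h2 : φ x = d⁻¹ * (g0 * x * g0⁻¹) * d := by
    rw [← hx]; group
  rw [h2]; group
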